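/- Let (A, μ, α) be a multiplicative third Hom-power associative Hom-algebra over a field k of characteristic 0. Then x⁴ = x³α²(x) = α²(x)x³ for all x ∈ A, where x² = xx, x³ = x²α(x), and x⁴ = x³α²(x). -/

import Mathlib

variable {k A : Type*} [Field k] [CharZero k] [AddCommGroup A] [Module k A]

/-- The `n`-th Hom-power: `x^1 = x`, `x^n = x^{n-1} · α^{n-2}(x)`. -/
def homPow (μ : A →ₗ[k] A →ₗ[k] A) (α : A →ₗ[k] A) (x : A) : ℕ → A
  | 0 => x
  | 1 => x
  | n + 2 => μ (homPow μ α x (n + 1)) ((α ^ n) x)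

/-- `A` is `n`-th Hom-power associative. -/
def IsNthHomPowerAssoc (μ : A →ₗ[k] A →ₗ[k] A) (α : A →ₗ[k] A) (n : ℕ) : Prop :=
  ∀ (x : A) (i : ℕ), 1 ≤ i → i ≤ n - 1 →
    homPow μ α x n =
      μ ((α ^ (n - i - 1)) (homPow μ α x i)) ((α ^ (i - 1)) (homPow μ α x (n - i)))

/-- `A` is Hom-power associative. -/
def IsHomPowerAssoc (μ : A →ₗ[k] A →ₗ[k] A) (α : A →ₗ[k] A) : Prop :=
  ∀ n : ℕ, 2 ≤ n → IsNthHomPowerAssoc μ α n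

/-- `A` is up to `n`-th Hom-power associative. -/
def IsUpToNthHomPowerAssoc (μ : A →ₗ[k] A →ₗ[k] A) (α : A →ₗ[k] A) (n : ℕ) : Prop :=
  ∀ m : ℕ, 2 ≤ m → m ≤ n → IsNthHomPowerAssoc μ α m

/-- The Hom-algebra `(A, μ, α)` is multiplicative. -/
def IsMultiplicative (μ : A →ₗ[k] A →ₗ[k] A) (α : A →ₗ[k] A) : Prop :=
  ∀ x y : A, α (μ x y) = μ (α x) (α y)


private theorem hom4_key (μ : A →ₗ[k] A →ₗ[k] A) (α : A →ₗ[k] A)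
    (hmul : IsMultiplicative μ α)
    (h3 : ∀ x : A, μ (μ x x) (α x) = μ (α x) (μ x x)) (x : A) :
    μ (μ (μ x x) (α x)) (α (α x)) = μ (α (α x)) (μ (μ x x) (α x)) := by
  set a := μ x x with ha
  set b := α x with hb
  have hαa : α a = μ b b := by rw [ha, hb, hmul]
  have hcomm : μ b a = μ a b := (h3 x).symm
  have h1 := h3 (a + b)
  have h2 := h3 (a - b)
  have h3a := h3 a
  simp only [map_add, map_sub, LinearMap.add_apply, LinearMap.sub_apply] at h1 h2
  rw [hαa, hcomm] at h1 h2
  rw [hαa] at h3a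
  have key : (4:k) • μ (μ a b) (α b) = (4:k) • μ (α b) (μ a b) := by
    linear_combination (norm := module) h1 + h2 - h3a - h3a
  exact smul_right_injective A (by norm_num : (4:k) ≠ 0) key

/-- Corollary: in a multiplicative third Hom-power associative algebra,
`x⁴ = x³α²(x) = α²(x)x³` for all `x`. -/
theorem stmt11 (μ : A →ₗ[k] A →ₗ[k] A) (α : A →ₗ[k] A)
    (hmul : IsMultiplicative μ α)
    (h3 : ∀ x : A, μ (μ x x) (α x) = μ (α x) (μ x x)) :
    ∀ x : A,
      homPow μ α x 4 = μ (homPow μ α x 3) ((α ^ 2) x) ∧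
      homPow μ α x 4 = μ ((α ^ 2) x) (homPow μ α x 3) := by
  intro x
  refine ⟨rfl, ?_⟩
  show μ (μ (μ x x) ((α ^ 1) x)) ((α ^ 2) x) = μ ((α ^ 2) x) (μ (μ x x) ((α ^ 1) x))
  simp only [pow_one, pow_two, Module.End.mul_apply]
  exact hom4_key μ α hmul h3 x
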